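/- Let a > 0 and let ψ(x) = (1/(2πa))·exp(−x²/(4πa²)) be the Gaussian density with standard deviation a·√(2π). Then the function C(m) = ∫_m^∞ (x − m)·ψ(x) dx is analytic on all of ℝ, and its Taylor coefficients c_k at 0 (so C(m) = Σ_k c_k m^k) satisfy c₀ = a, c₁ = −1/2, c₂ = 1/(4πa), c₃ = 0, c₄ = −1/(96π²a³), c₅ = 0 and c₆ = 1/(1920π³a⁵). -/

import Mathlib

open MeasureTheory

/-- Bachelier's Gaussian density in his parametrization: `ψ(x) = (1/(2πa))·exp(−x²/(4πa²))`,
the centered Gaussian density with standard deviation `a√(2π)`. -/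
noncomputable def bachelierPsi (a x : ℝ) : ℝ :=
  (2 * Real.pi * a)⁻¹ * Real.exp (-x ^ 2 / (4 * Real.pi * a ^ 2))

/-- Bachelier call price as a function of `m = K − S₀`. -/
noncomputable def bachelierCall (a m : ℝ) : ℝ :=
  ∫ x in Set.Ioi m, (x - m) * bachelierPsi a x

open Real Set Filter

section Aux

variable {a : ℝ}

lemma psi_eq (x : ℝ) : bachelierPsi a x
    = (2 * π * a)⁻¹ * Real.exp (-((4 * π * a ^ 2)⁻¹) * x ^ 2) := by
  rw [bachelierPsi, show -x ^ 2 / (4 * π * a ^ 2) = -((4 * π * a ^ 2)⁻¹) * x ^ 2 by ring]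

lemma hB (ha : 0 < a) : 0 < (4 * π * a ^ 2)⁻¹ := by positivity

lemma psi_integrable (ha : 0 < a) : Integrable (bachelierPsi a) := by
  have := (integrable_exp_neg_mul_sq (hB ha)).const_mul (2 * π * a)⁻¹
  refine this.congr (Filter.Eventually.of_forall fun x => ?_)
  rw [psi_eq]

lemma x_psi_integrable (ha : 0 < a) : Integrable (fun x => x * bachelierPsi a x) := by
  have := (integrable_mul_exp_neg_mul_sq (hB ha)).const_mul (2 * π * a)⁻¹
  refine this.congr (Filter.Eventually.of_forall fun x => ?_)
  simp only [psi_eq]; ring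

lemma psi_total (ha : 0 < a) : ∫ x, bachelierPsi a x = 1 := by
  have h2 : (0:ℝ) < 2 * π * a := by positivity
  rw [show bachelierPsi a = fun x => (2 * π * a)⁻¹ * Real.exp (-((4 * π * a ^ 2)⁻¹) * x ^ 2)
      from funext psi_eq, MeasureTheory.integral_const_mul, integral_gaussian,
    show π / (4 * π * a ^ 2)⁻¹ = (2 * π * a)^2 by field_simp; ring,
    Real.sqrt_sq h2.le, inv_mul_cancel₀ h2.ne']

lemma psi_Iic_zero (ha : 0 < a) : ∫ x in Iic (0:ℝ), bachelierPsi a x = 1/2 := by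
  have heven : ∀ x : ℝ, bachelierPsi a (-x) = bachelierPsi a x := fun x => by
    simp [bachelierPsi, neg_sq]
  have e1 : ∫ x in Iic (0:ℝ), bachelierPsi a x = ∫ x in Ioi (0:ℝ), bachelierPsi a x := by
    rw [show (∫ x in Iic (0:ℝ), bachelierPsi a x)
        = ∫ x in Iic (0:ℝ), bachelierPsi a (-x) by simp [heven]]
    rw [integral_comp_neg_Iic, neg_zero]
  have e2 := intervalIntegral.integral_Iic_add_Ioi (b := (0:ℝ))
    (psi_integrable ha).integrableOn (psi_integrable ha).integrableOn
  rw [psi_total ha] at e2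
  linarith [e1, e2]

lemma psi_Ioi (ha : 0 < a) (m : ℝ) :
    ∫ x in Ioi m, bachelierPsi a x = 1/2 - ∫ x in (0:ℝ)..m, bachelierPsi a x := by
  have e2 := intervalIntegral.integral_Iic_add_Ioi (b := m)
    (psi_integrable ha).integrableOn (psi_integrable ha).integrableOn
  rw [psi_total ha] at e2
  have e3 := intervalIntegral.integral_Iic_sub_Iic (f := bachelierPsi a) (μ := volume)
    (psi_integrable ha).integrableOn (psi_integrable ha).integrableOn (a := 0) (b := m)
  rw [psi_Iic_zero ha] at e3
  linarith

lemma x_psi_Ioi (ha : 0 < a) (m : ℝ) :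
    ∫ x in Ioi m, x * bachelierPsi a x = a * Real.exp (-((4 * π * a ^ 2)⁻¹) * m ^ 2) := by
  set B := (4 * π * a ^ 2)⁻¹ with hBdef
  have hBpos : 0 < B := hB ha
  have hderiv : ∀ x ∈ Ici m, HasDerivAt (fun x : ℝ => -a * Real.exp (-B * x ^ 2))
      (x * bachelierPsi a x) x := by
    intro x _
    have h1 : HasDerivAt (fun x : ℝ => -B * x ^ 2) (-B * (2 * x)) x := by
      simpa using ((hasDerivAt_pow 2 x).const_mul (-B))
    have h2 := (h1.exp).const_mul (-a)
    refine h2.congr_deriv ?_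
    rw [psi_eq, hBdef]
    have hπ := pi_pos
    field_simp
    ring
  have htend : Tendsto (fun x : ℝ => -a * Real.exp (-B * x ^ 2)) atTop (nhds 0) := by
    rw [show (0:ℝ) = -a * 0 by ring]
    apply Tendsto.const_mul
    apply Real.tendsto_exp_atBot.comp
    rw [show (fun x : ℝ => -B * x ^ 2) = fun x : ℝ => -(B * x ^ 2) by funext x; ring]
    exact (tendsto_neg_atBot_iff.mpr ((tendsto_pow_atTop two_ne_zero).const_mul_atTop hBpos))
  have := integral_Ioi_of_hasDerivAt_of_tendsto
    (Continuous.continuousWithinAt (by fun_prop))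
    (fun x hx => hderiv x (mem_of_mem_of_subset hx Ioi_subset_Ici_self))
    (x_psi_integrable ha).integrableOn htend
  rw [this]; ring

lemma bachelierCall_closed (ha : 0 < a) (m : ℝ) :
    bachelierCall a m = a * Real.exp (-((4 * π * a ^ 2)⁻¹) * m ^ 2) - m / 2
      + m * ∫ x in (0:ℝ)..m, bachelierPsi a x := by
  have h1 : bachelierCall a m
      = (∫ x in Ioi m, x * bachelierPsi a x) - ∫ x in Ioi m, m * bachelierPsi a x := by
    rw [bachelierCall, ← integral_sub (x_psi_integrable ha).integrableOn
      (((psi_integrable ha).const_mul m).integrableOn)]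
    congr 1; funext x; ring
  rw [h1, integral_const_mul, x_psi_Ioi ha, psi_Ioi ha]
  ring

lemma hasSum_exp_real (u : ℝ) : HasSum (fun n => u ^ n / n.factorial) (Real.exp u) := by
  rw [Real.exp_eq_exp_ℝ]; exact NormedSpace.expSeries_div_hasSum_exp u

/-- termwise integration of the gaussian density on `[0, m]` -/
lemma psi_intervalIntegral_hasSum (ha : 0 < a) (m : ℝ) :
    HasSum (fun k : ℕ => (2 * π * a)⁻¹ * (-(4 * π * a ^ 2)⁻¹) ^ k * m ^ (2 * k + 1)
        / ((2 * k + 1) * k.factorial))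
      (∫ x in (0:ℝ)..m, bachelierPsi a x) := by
  set B := (4 * π * a ^ 2)⁻¹ with hBdef
  have hBpos : 0 < B := hB ha
  have hc : (0:ℝ) < 2 * π * a := by positivity
  have key : HasSum
      (fun k : ℕ => ∫ x in (0:ℝ)..m, (2 * π * a)⁻¹ * ((-B * x ^ 2) ^ k / k.factorial))
      (∫ x in (0:ℝ)..m, bachelierPsi a x) := by
    apply intervalIntegral.hasSum_integral_of_dominated_convergence
      (bound := fun k x => (2 * π * a)⁻¹ * ((B * x ^ 2) ^ k / k.factorial))
    · intro k
      exact (Continuous.aestronglyMeasurable (by fun_prop))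
    · intro k
      filter_upwards with x _
      rw [Real.norm_eq_abs, abs_mul, abs_div, abs_pow,
        abs_of_nonneg (le_of_lt (inv_pos.mpr hc)),
        show |(-B * x ^ 2)| = B * x ^ 2 by
          rw [neg_mul, abs_neg, abs_of_nonneg (by positivity)],
        abs_of_nonneg (Nat.cast_nonneg _)]
    · filter_upwards with x _
      exact ((hasSum_exp_real (B * x ^ 2)).mul_left _).summable
    · apply Continuous.intervalIntegrable
      have : (fun x : ℝ => ∑' k : ℕ, (2 * π * a)⁻¹ * ((B * x ^ 2) ^ k / k.factorial))
          = fun x => (2 * π * a)⁻¹ * Real.exp (B * x ^ 2) := by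
        funext x
        exact ((hasSum_exp_real (B * x ^ 2)).mul_left _).tsum_eq
      rw [this]; fun_prop
    · filter_upwards with x _
      rw [psi_eq (a := a) x]
      exact (hasSum_exp_real (-B * x ^ 2)).mul_left _
  convert key using 2 with k
  rw [show (fun x : ℝ => (2 * π * a)⁻¹ * ((-B * x ^ 2) ^ k / k.factorial))
      = fun x : ℝ => ((2 * π * a)⁻¹ * ((-B) ^ k / k.factorial)) * x ^ (2 * k) from
    funext fun x => by rw [mul_pow, ← pow_mul]; ring]
  rw [intervalIntegral.integral_const_mul, integral_pow]
  rw [zero_pow (by omega)]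
  have hk : (k.factorial : ℝ) ≠ 0 := Nat.cast_ne_zero.mpr k.factorial_ne_zero
  have h2k : ((2 * k + 1 : ℕ) : ℝ) ≠ 0 := Nat.cast_ne_zero.mpr (by omega)
  have hπ : π ≠ 0 := pi_ne_zero
  push_cast at h2k ⊢
  field_simp
  ring

end Aux

/-- The Taylor coefficients of the Bachelier call. -/
noncomputable def bcoef (a : ℝ) : ℕ → ℝ
  | 0 => a
  | 1 => -(1/2)
  | (n + 2) => if n % 2 = 0 then
      (-1 : ℝ) ^ (n / 2) * a * ((4 * Real.pi * a ^ 2)⁻¹) ^ (n / 2 + 1)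
        / ((2 * (n / 2) + 1) * ((n / 2 + 1).factorial)) else 0

section Series

variable {a : ℝ}

lemma bcoef_even (k : ℕ) : bcoef a (2 * k + 2)
    = (-1 : ℝ) ^ k * a * ((4 * Real.pi * a ^ 2)⁻¹) ^ (k + 1)
        / ((2 * k + 1) * ((k + 1).factorial)) := by
  show bcoef a (2 * k + 2) = _
  rw [bcoef]
  simp [Nat.mul_mod_right, Nat.mul_div_cancel_left]

lemma bcoef_odd (k : ℕ) : bcoef a (2 * (k + 1) + 1) = 0 := by
  rw [show 2 * (k + 1) + 1 = (2 * k + 1) + 2 by ring, bcoef]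
  simp [Nat.add_mod, Nat.mul_mod_right]

lemma key_alg (ha : 0 < a) (m : ℝ) (j : ℕ) :
    (-1 : ℝ) ^ j * a * ((4 * Real.pi * a ^ 2)⁻¹) ^ (j + 1)
        / ((2 * j + 1) * ((j + 1).factorial)) * m ^ (2 * j + 2)
    = a * (((-1 : ℝ) ^ (j + 1) * ((4 * Real.pi * a ^ 2)⁻¹ ^ (j + 1) * m ^ (2 * j + 2)))
          / ((j + 1).factorial))
      + m * ((2 * π * a)⁻¹ * ((-1 : ℝ) ^ j * (4 * Real.pi * a ^ 2)⁻¹ ^ j) * m ^ (2 * j + 1)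
          / ((2 * j + 1) * j.factorial)) := by
  have hfj : ((j.factorial : ℕ) : ℝ) ≠ 0 := Nat.cast_ne_zero.mpr j.factorial_ne_zero
  have h2j : ((2 : ℝ) * j + 1) ≠ 0 := by positivity
  have hj1 : ((j : ℝ) + 1) ≠ 0 := by positivity
  have hπ' : (π : ℝ) ≠ 0 := pi_ne_zero
  have ha' : a ≠ 0 := ne_of_gt ha
  have hfac : (((j + 1).factorial : ℕ) : ℝ) = ((j : ℝ) + 1) * j.factorial := by
    rw [Nat.factorial_succ]; push_cast; ring
  rw [show (((j + 1).factorial : ℕ) : ℝ) = ((j : ℝ) + 1) * j.factorial from hfac,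
    pow_succ (-1 : ℝ) j, pow_succ ((4 * Real.pi * a ^ 2)⁻¹) j,
    show 2 * j + 2 = (2 * j + 1) + 1 by ring, pow_succ m (2 * j + 1)]
  field_simp
  ring

set_option maxHeartbeats 1000000 in
lemma main_hasSum (ha : 0 < a) (m : ℝ) :
    HasSum (fun n : ℕ => bcoef a n * m ^ n) (bachelierCall a m) := by
  set B := (4 * π * a ^ 2)⁻¹ with hBdef
  have hA : HasSum (fun k : ℕ => a * ((-B * m ^ 2) ^ k / k.factorial))
      (a * Real.exp (-B * m ^ 2)) := (hasSum_exp_real _).mul_left a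
  have hI : HasSum (fun k : ℕ => m * ((2 * π * a)⁻¹ * (-B) ^ k * m ^ (2 * k + 1)
        / ((2 * k + 1) * k.factorial)))
      (m * ∫ x in (0:ℝ)..m, bachelierPsi a x) := (psi_intervalIntegral_hasSum ha m).mul_left m
  set Sh : ℕ → ℝ := fun k => Nat.casesOn k 0 (fun j => m * ((2 * π * a)⁻¹ * (-B) ^ j
      * m ^ (2 * j + 1) / ((2 * j + 1) * j.factorial))) with hSh
  have hI0 : HasSum Sh (m * ∫ x in (0:ℝ)..m, bachelierPsi a x) := by
    have h1 : HasSum (fun n : ℕ => Sh (n + 1)) (m * ∫ x in (0:ℝ)..m, bachelierPsi a x) := hI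
    have h2 := (hasSum_nat_add_iff (f := Sh) 1).mp h1
    rw [Finset.sum_range_one, show Sh 0 = 0 from rfl, add_zero] at h2
    exact h2
  have hEven : HasSum (fun k : ℕ => bcoef a (2 * k) * m ^ (2 * k))
      (a * Real.exp (-B * m ^ 2) + m * ∫ x in (0:ℝ)..m, bachelierPsi a x) := by
    have hfun : (fun k : ℕ => bcoef a (2 * k) * m ^ (2 * k))
        = fun k : ℕ => a * ((-B * m ^ 2) ^ k / k.factorial) + Sh k := by
      funext k
      cases k with
      | zero =>
        rw [show Sh 0 = 0 from rfl, add_zero]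
        norm_num [bcoef]
      | succ j =>
        rw [show Sh (j + 1) = m * ((2 * π * a)⁻¹ * (-B) ^ j * m ^ (2 * j + 1)
            / ((2 * j + 1) * j.factorial)) from rfl,
          show 2 * (j + 1) = 2 * j + 2 by ring, bcoef_even]
        have e1 : (-B * m ^ 2) ^ (j + 1)
            = (-1 : ℝ) ^ (j + 1) * (B ^ (j + 1) * m ^ (2 * j + 2)) := by
          rw [neg_mul, neg_pow, mul_pow, ← pow_mul, show 2 * (j + 1) = 2 * j + 2 by ring]
        have e2 : (-B : ℝ) ^ j = (-1 : ℝ) ^ j * B ^ j := by rw [neg_pow]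
        rw [e1, e2, hBdef]
        exact key_alg ha m j
    rw [hfun]
    exact hA.add hI0
  have hOdd : HasSum (fun k : ℕ => bcoef a (2 * k + 1) * m ^ (2 * k + 1)) (bcoef a 1 * m ^ 1) := by
    apply hasSum_single 0
    intro k hk
    obtain ⟨j, rfl⟩ : ∃ j, k = j + 1 := ⟨k - 1, by omega⟩
    rw [bcoef_odd, zero_mul]
  have htot : HasSum (fun n : ℕ => bcoef a n * m ^ n)
      ((a * Real.exp (-B * m ^ 2) + m * ∫ x in (0:ℝ)..m, bachelierPsi a x)
        + bcoef a 1 * m ^ 1) :=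
    HasSum.even_add_odd hEven hOdd
  have hsum : (a * Real.exp (-B * m ^ 2) + m * ∫ x in (0:ℝ)..m, bachelierPsi a x)
      + bcoef a 1 * m ^ 1 = bachelierCall a m := by
    rw [bachelierCall_closed ha m, show bcoef a 1 = -(1/2) from rfl]; ring
  exact hsum ▸ htot

lemma bcoef_abs_le (ha : 0 < a) (k : ℕ) :
    |bcoef a (2 * k)| ≤ a * ((4 * Real.pi * a ^ 2)⁻¹) ^ k / k.factorial := by
  cases k with
  | zero => simp [bcoef, abs_of_pos ha]
  | succ j =>
    rw [show 2 * (j + 1) = 2 * j + 2 by ring, bcoef_even]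
    set B := (4 * Real.pi * a ^ 2)⁻¹ with hBdef
    have hBpos : (0:ℝ) < B := by rw [hBdef]; positivity
    rw [abs_div, abs_mul, abs_mul, abs_pow, abs_neg, abs_one, one_pow, one_mul,
      abs_of_pos ha, abs_of_pos (pow_pos hBpos (j+1)),
      abs_of_pos (by positivity : (0:ℝ) < (2 * (j:ℝ) + 1) * ((j + 1).factorial))]
    rw [div_le_div_iff₀ (by positivity) (by positivity)]
    have hpos : (0:ℝ) < a * B ^ (j + 1) * (j + 1).factorial :=
      mul_pos (mul_pos ha (pow_pos hBpos (j + 1)))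
        ((Nat.cast_pos (α := ℝ)).mpr (j + 1).factorial_pos)
    nlinarith [hpos, (Nat.cast_nonneg (α := ℝ) j)]

lemma bcoef_summable_abs (ha : 0 < a) (r : ℝ) (hr : 0 ≤ r) :
    Summable (fun n : ℕ => |bcoef a n| * r ^ n) := by
  have heven : Summable (fun k : ℕ => |bcoef a (2 * k)| * r ^ (2 * k)) := by
    refine Summable.of_nonneg_of_le (fun k => by positivity) (fun k => ?_)
      ((Real.summable_pow_div_factorial ((4 * Real.pi * a ^ 2)⁻¹ * r ^ 2)).mul_left a)
    have h1 := bcoef_abs_le ha k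
    have h2 : (0:ℝ) ≤ r ^ (2 * k) := by positivity
    calc |bcoef a (2 * k)| * r ^ (2 * k)
        ≤ (a * ((4 * Real.pi * a ^ 2)⁻¹) ^ k / k.factorial) * r ^ (2 * k) :=
          mul_le_mul_of_nonneg_right h1 h2
      _ = a * (((4 * Real.pi * a ^ 2)⁻¹ * r ^ 2) ^ k / k.factorial) := by
          rw [mul_pow, ← pow_mul]; ring
  have hodd : Summable (fun k : ℕ => |bcoef a (2 * k + 1)| * r ^ (2 * k + 1)) := by
    apply (hasSum_single (f := fun k : ℕ => |bcoef a (2 * k + 1)| * r ^ (2 * k + 1)) 0 ?_).summable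
    intro k hk
    obtain ⟨j, rfl⟩ : ∃ j, k = j + 1 := ⟨k - 1, by omega⟩
    simp only [bcoef_odd, abs_zero, zero_mul]
  exact (HasSum.even_add_odd (f := fun n : ℕ => |bcoef a n| * r ^ n)
    heven.hasSum hodd.hasSum).summable

end Series

/-- The Bachelier power series as a formal multilinear series. -/
noncomputable def bseries (a : ℝ) : FormalMultilinearSeries ℝ ℝ ℝ :=
  FormalMultilinearSeries.ofScalars ℝ (bcoef a)

section Ball

variable {a : ℝ}

lemma bseries_radius (ha : 0 < a) : (bseries a).radius = ⊤ := by
  apply FormalMultilinearSeries.radius_eq_top_of_summable_norm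
  intro r
  have h2 : (fun n : ℕ => ‖bseries a n‖ * (r:ℝ) ^ n) = fun n : ℕ => |bcoef a n| * (r:ℝ) ^ n :=
    funext fun n => by
      rw [bseries, FormalMultilinearSeries.ofScalars_norm, Real.norm_eq_abs]
  rw [h2]
  exact bcoef_summable_abs ha r r.coe_nonneg

lemma bball (ha : 0 < a) : HasFPowerSeriesOnBall (bachelierCall a) (bseries a) 0 ⊤ := by
  refine ⟨by rw [bseries_radius ha], ENNReal.zero_lt_top, fun {y} _ => ?_⟩
  have hfun : (fun n : ℕ => bseries a n fun _ => y) = fun n : ℕ => bcoef a n * y ^ n :=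
    funext fun n => by
      rw [bseries, FormalMultilinearSeries.ofScalars_apply_eq, smul_eq_mul]
  rw [hfun, zero_add]
  exact main_hasSum ha y

lemma iterated_deriv_eq (ha : 0 < a) (n : ℕ) :
    iteratedDeriv n (bachelierCall a) 0 / (n.factorial : ℝ) = bcoef a n := by
  have h := (bball ha).factorial_smul (1 : ℝ) n
  rw [iteratedDeriv_eq_iteratedFDeriv]
  rw [← h]
  have : (bseries a n fun _ => (1:ℝ)) = bcoef a n := by
    rw [bseries, FormalMultilinearSeries.ofScalars_apply_eq, one_pow, smul_eq_mul, mul_one]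
  rw [this, nsmul_eq_mul]
  have hne : (n.factorial : ℝ) ≠ 0 := Nat.cast_ne_zero.mpr n.factorial_ne_zero
  field_simp

end Ball

/-- Bachelier's series: `C(m) = ∫_m^∞ (x − m)ψ(x)dx` is analytic on all of `ℝ`, equals its
Taylor series everywhere, and its Taylor coefficients `c_k = C^{(k)}(0)/k!` satisfy
`c₀ = a`, `c₁ = −1/2`, `c₂ = 1/(4πa)`, `c₃ = 0`, `c₄ = −1/(96π²a³)`, `c₅ = 0`,
`c₆ = 1/(1920π³a⁵)`. -/
theorem bachelier_series_coefficients (a : ℝ) (ha : 0 < a) :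
    AnalyticOnNhd ℝ (bachelierCall a) Set.univ
      ∧ (∀ m : ℝ, HasSum
          (fun k : ℕ => iteratedDeriv k (bachelierCall a) 0 / (Nat.factorial k : ℝ) * m ^ k)
          (bachelierCall a m))
      ∧ iteratedDeriv 0 (bachelierCall a) 0 / (Nat.factorial 0 : ℝ) = a
      ∧ iteratedDeriv 1 (bachelierCall a) 0 / (Nat.factorial 1 : ℝ) = -(1 / 2)
      ∧ iteratedDeriv 2 (bachelierCall a) 0 / (Nat.factorial 2 : ℝ) = 1 / (4 * Real.pi * a)
      ∧ iteratedDeriv 3 (bachelierCall a) 0 / (Nat.factorial 3 : ℝ) = 0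
      ∧ iteratedDeriv 4 (bachelierCall a) 0 / (Nat.factorial 4 : ℝ)
          = -(1 / (96 * Real.pi ^ 2 * a ^ 3))
      ∧ iteratedDeriv 5 (bachelierCall a) 0 / (Nat.factorial 5 : ℝ) = 0
      ∧ iteratedDeriv 6 (bachelierCall a) 0 / (Nat.factorial 6 : ℝ)
          = 1 / (1920 * Real.pi ^ 3 * a ^ 5) := by
  have hπ : Real.pi ≠ 0 := Real.pi_ne_zero
  have ha' : a ≠ 0 := ne_of_gt ha
  refine ⟨?_, ?_, ?_, ?_, ?_, ?_, ?_, ?_, ?_⟩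
  · intro x _
    exact (bball ha).analyticOnNhd x (by simp [EMetric.mem_ball, edist_lt_top])
  · intro m
    have hfun : (fun k : ℕ => iteratedDeriv k (bachelierCall a) 0 / (Nat.factorial k : ℝ) * m ^ k)
        = fun k : ℕ => bcoef a k * m ^ k :=
      funext fun k => by rw [iterated_deriv_eq ha]
    rw [hfun]
    exact main_hasSum ha m
  · rw [iterated_deriv_eq ha]; rfl
  · rw [iterated_deriv_eq ha]; rfl
  · rw [iterated_deriv_eq ha]
    show bcoef a (0 + 2) = _
    rw [bcoef]
    norm_num
    field_simp
  · rw [iterated_deriv_eq ha]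
    show bcoef a (1 + 2) = _
    rw [bcoef]
    norm_num
  · rw [iterated_deriv_eq ha]
    show bcoef a (2 + 2) = _
    rw [bcoef]
    norm_num [Nat.factorial]
    field_simp
    ring
  · rw [iterated_deriv_eq ha]
    show bcoef a (3 + 2) = _
    rw [bcoef]
    norm_num
  · rw [iterated_deriv_eq ha]
    show bcoef a (4 + 2) = _
    rw [bcoef]
    norm_num [Nat.factorial]
    field_simp
    ring
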